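/- Let β ∈ ℝⁿ, α², ν, t₀ > 0, 0 < μ < 1, z(ξ) = α²‖ξ‖² + i(β·ξ) + ν, Λ(ξ) = z(ξ)/(1 - e^{-z(ξ)t₀}), and R¹_μ(ξ) = Λ(ξ)/(1 + μ²‖ξ‖²). Then for all ξ ∈ ℝⁿ, |R¹_μ(ξ)| < M₁/μ² where M₁ = max{2ν + 2α² + √n‖β‖_∞, 2/t₀ + √n‖β‖_∞/(ν t₀)}. -/

import Mathlib

private lemma R15_keyA (a bb B d ν α2 μ r : ℝ) (hν : 0 < ν) (hα : 0 < α2)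
    (hμ0 : 0 < μ) (hμ1 : μ < 1) (hB : 0 ≤ B) (hr : 0 ≤ r)
    (ha_def : a = α2 * r ^ 2 + ν) (hd_def : d = 1 + μ ^ 2 * r ^ 2)
    (hbb : 0 ≤ bb) (hbB : bb ≤ B * r) :
    2 * (a + bb) * μ ^ 2 < (2 * ν + 2 * α2 + B) * d := by
  subst ha_def hd_def
  nlinarith [mul_pos hν (show (0:ℝ) < 1 - μ ^ 2 by nlinarith),
    mul_nonneg hB (sq_nonneg (1 - μ * r)),
    mul_nonneg (mul_nonneg (mul_nonneg hB hμ0.le) hr) (sub_nonneg.2 hμ1.le),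
    mul_nonneg hν.le (mul_nonneg (sq_nonneg μ) (sq_nonneg r)),
    mul_le_mul_of_nonneg_left hbB (show (0:ℝ) ≤ 2 * μ ^ 2 by positivity)]

private lemma R15_keyB (a bb B d ν α2 μ r : ℝ) (hν : 0 < ν) (hα : 0 < α2)
    (hμ0 : 0 < μ) (hμ1 : μ < 1) (hB : 0 ≤ B) (hr : 0 ≤ r)
    (ha_def : a = α2 * r ^ 2 + ν) (hd_def : d = 1 + μ ^ 2 * r ^ 2)
    (hbb : 0 ≤ bb) (hbB : bb ≤ B * r) :
    (a + bb) * μ ^ 2 * (2 * ν) < (2 * ν + B) * (a * d) := by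
  subst ha_def hd_def
  nlinarith [mul_pos (mul_pos hν (show (0:ℝ) < α2 * r ^ 2 + ν by positivity))
      (show (0:ℝ) < 1 - μ ^ 2 + μ ^ 2 * r ^ 2 by nlinarith),
    mul_nonneg (mul_nonneg hν.le hB) (sq_nonneg (1 - μ * r)),
    mul_nonneg (mul_nonneg (mul_nonneg (mul_nonneg hν.le hB) hμ0.le) hr) (sub_nonneg.2 hμ1.le),
    mul_nonneg (mul_nonneg hB hα.le) (sq_nonneg r),
    mul_nonneg (mul_nonneg (mul_nonneg hB hα.le) (sq_nonneg μ)) (sq_nonneg (r ^ 2)),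
    mul_le_mul_of_nonneg_left hbB (show (0:ℝ) ≤ 2 * μ ^ 2 * ν by positivity)]

private lemma R15_real (a bb B E d t0 ν α2 μ r : ℝ) (hν : 0 < ν) (hα : 0 < α2)
    (ht : 0 < t0) (hμ0 : 0 < μ) (hμ1 : μ < 1) (hB : 0 ≤ B) (hr : 0 ≤ r)
    (ha_def : a = α2 * r ^ 2 + ν) (hd_def : d = 1 + μ ^ 2 * r ^ 2)
    (hbb : 0 ≤ bb) (hbB : bb ≤ B * r) (hE_def : E = 1 - Real.exp (-(a * t0))) :
    (a + bb) / E / d < max (2 * ν + 2 * α2 + B) (2 / t0 + B / (ν * t0)) / μ ^ 2 := by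
  have ha : 0 < a := by rw [ha_def]; positivity
  have hd : 0 < d := by rw [hd_def]; positivity
  have hx : 0 < a * t0 := mul_pos ha ht
  have hE : 0 < E := by
    rw [hE_def]
    have : Real.exp (-(a * t0)) < 1 := Real.exp_lt_one_iff.mpr (by linarith)
    linarith
  set M := max (2 * ν + 2 * α2 + B) (2 / t0 + B / (ν * t0)) with hM
  rw [div_div, div_lt_div_iff₀ (by positivity) (by positivity)]
  rcases le_or_gt (Real.log 2) (a * t0) with hcase | hcase
  · -- large a * t0 : E ≥ 1/2
    have hEhalf : (1:ℝ) / 2 ≤ E := by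
      have h2 : Real.exp (-(a * t0)) ≤ 1 / 2 := by
        rw [show (1:ℝ) / 2 = Real.exp (-Real.log 2) by
          rw [Real.exp_neg, Real.exp_log (by norm_num)]; norm_num]
        exact Real.exp_le_exp.mpr (by linarith)
      rw [hE_def]; linarith
    calc (a + bb) * μ ^ 2 < (2 * ν + 2 * α2 + B) * (1 / 2 * d) := by
          have := R15_keyA a bb B d ν α2 μ r hν hα hμ0 hμ1 hB hr ha_def hd_def hbb hbB
          nlinarith
      _ ≤ M * (E * d) := by
          apply mul_le_mul (le_max_left _ _)
            (mul_le_mul_of_nonneg_right hEhalf hd.le) (by positivity)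
          exact le_trans (by positivity) (le_max_left _ _)
  · -- small a * t0 : E ≥ a * t0 / 2
    have he1 : (1:ℝ) / 2 ≤ Real.exp (-(a * t0)) := by
      rw [show (1:ℝ) / 2 = Real.exp (-Real.log 2) by
        rw [Real.exp_neg, Real.exp_log (by norm_num)]; norm_num]
      exact Real.exp_le_exp.mpr (by linarith)
    have hmul : Real.exp (a * t0) * Real.exp (-(a * t0)) = 1 := by
      rw [← Real.exp_add]; simp
    have he2 : (a * t0) * Real.exp (-(a * t0)) ≤ E := by
      rw [hE_def]
      nlinarith [Real.add_one_le_exp (a * t0), Real.exp_pos (-(a * t0))]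
    have hEB : a * t0 / 2 ≤ E := by nlinarith
    have hM2 : (2 / t0 + B / (ν * t0)) * (ν * t0) = 2 * ν + B := by
      field_simp
    calc (a + bb) * μ ^ 2 < (2 / t0 + B / (ν * t0)) * (a * t0 / 2 * d) := by
          rw [show (2 / t0 + B / (ν * t0)) * (a * t0 / 2 * d)
              = ((2 / t0 + B / (ν * t0)) * (ν * t0)) * (a * d) / (2 * ν) by
            field_simp, hM2, lt_div_iff₀ (by positivity : (0:ℝ) < 2 * ν)]
          exact R15_keyB a bb B d ν α2 μ r hν hα hμ0 hμ1 hB hr ha_def hd_def hbb hbB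
      _ ≤ M * (E * d) := by
          apply mul_le_mul (le_max_right _ _)
            (mul_le_mul_of_nonneg_right hEB hd.le) (by positivity)
          exact le_trans (by positivity) (le_max_right _ _)

theorem R15_bound {n : ℕ} (β : EuclideanSpace ℝ (Fin n))
    (α2 ν t0 μ : ℝ) (hα : 0 < α2) (hν : 0 < ν) (ht : 0 < t0)
    (hμ0 : 0 < μ) (hμ1 : μ < 1) :
    ∀ ξ : EuclideanSpace ℝ (Fin n),
      norm
        (((((α2 * ‖ξ‖ ^ 2 + ν : ℝ) : ℂ) + (inner ℝ β ξ : ℝ) * Complex.I) /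
            (1 - Complex.exp
              (-((((α2 * ‖ξ‖ ^ 2 + ν : ℝ) : ℂ) + (inner ℝ β ξ : ℝ) * Complex.I) * t0)))) /
          ((1 + μ ^ 2 * ‖ξ‖ ^ 2 : ℝ) : ℂ)) <
        (max (2 * ν + 2 * α2 + Real.sqrt n * (⨆ i, |β i|)) (2 / t0 + Real.sqrt n * (⨆ i, |β i|) / (ν * t0))) / μ ^ 2 := by
  intro ξ
  set S : ℝ := ⨆ i, |β i| with hS
  have hS0 : 0 ≤ S := Real.iSup_nonneg fun i => abs_nonneg _
  have hr : 0 ≤ ‖ξ‖ := norm_nonneg _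
  set a : ℝ := α2 * ‖ξ‖ ^ 2 + ν with ha_def
  have ha : 0 < a := by rw [ha_def]; positivity
  set b : ℝ := (inner ℝ β ξ : ℝ) with hb_def
  set d : ℝ := 1 + μ ^ 2 * ‖ξ‖ ^ 2 with hd_def
  have hd : 0 < d := by rw [hd_def]; positivity
  set z : ℂ := (a : ℂ) + (b : ℝ) * Complex.I with hz
  -- bound on |b|
  have hβnorm : ‖β‖ ≤ Real.sqrt n * S := by
    rw [EuclideanSpace.norm_eq]
    have hsum : ∑ i, ‖β i‖ ^ 2 ≤ (n : ℝ) * S ^ 2 := by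
      calc ∑ i, ‖β i‖ ^ 2 ≤ ∑ _i : Fin n, S ^ 2 := by
            apply Finset.sum_le_sum
            intro i _
            have hi : |β i| ≤ S := le_ciSup (Set.finite_range fun j => |β j|).bddAbove i
            rw [Real.norm_eq_abs]
            nlinarith [abs_nonneg (β i)]
        _ = (n : ℝ) * S ^ 2 := by
            rw [Finset.sum_const, Finset.card_univ, Fintype.card_fin, nsmul_eq_mul]
    calc Real.sqrt (∑ i, ‖β i‖ ^ 2) ≤ Real.sqrt ((n : ℝ) * S ^ 2) := Real.sqrt_le_sqrt hsum
      _ = Real.sqrt n * S := by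
          rw [Real.sqrt_mul (Nat.cast_nonneg n), Real.sqrt_sq hS0]
  have hb : |b| ≤ (Real.sqrt n * S) * ‖ξ‖ :=
    le_trans (abs_real_inner_le_norm β ξ)
      (mul_le_mul_of_nonneg_right hβnorm (norm_nonneg ξ))
  -- complex estimates
  have habsz : ‖z‖ ≤ a + |b| := by
    calc ‖z‖ ≤ |z.re| + |z.im| := Complex.norm_le_abs_re_add_abs_im z
      _ = a + |b| := by
          rw [show z.re = a by simp [hz], show z.im = b by simp [hz], abs_of_pos ha]
  set E : ℝ := 1 - Real.exp (-(a * t0)) with hE_def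
  have hE : 0 < E := by
    rw [hE_def]
    have : Real.exp (-(a * t0)) < 1 := Real.exp_lt_one_iff.mpr (by nlinarith)
    linarith
  have habsexp : ‖Complex.exp (-(z * (t0 : ℂ)))‖ = Real.exp (-(a * t0)) := by
    rw [Complex.norm_exp]
    congr 1
    simp [hz, Complex.mul_re]
  have hD : E ≤ ‖1 - Complex.exp (-(z * (t0 : ℂ)))‖ := by
    have h := norm_sub_norm_le (1 : ℂ) (Complex.exp (-(z * (t0 : ℂ))))
    rw [habsexp] at h
    simpa [hE_def] using h
  have hDpos : 0 < ‖1 - Complex.exp (-(z * (t0 : ℂ)))‖ := lt_of_lt_of_le hE hD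
  rw [norm_div, norm_div, Complex.norm_real, Real.norm_eq_abs, abs_of_pos hd]
  have step : ‖z‖ / ‖1 - Complex.exp (-(z * (t0 : ℂ)))‖ / d
      ≤ (a + |b|) / E / d := by
    apply div_le_div_of_nonneg_right _ hd.le
    exact div_le_div₀ (by positivity) habsz hE hD
  refine lt_of_le_of_lt step ?_
  exact R15_real a |b| (Real.sqrt n * S) E d t0 ν α2 μ ‖ξ‖ hν hα ht hμ0 hμ1
    (by positivity) hr ha_def hd_def (abs_nonneg b) hb hE_def
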